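/- Let D be a diagram, i_1 ≠ i_2 two row indices, and D^A the diagram obtained from D by moving boxes from row i_1 to row i_2 within their columns where possible, with φ the induced column-preserving bijection from the boxes of D to the boxes of D^A and all elements associated to D^A regarded in ℂ[Σ_D] via φ. Let Y be a set of right coset representatives of R_D ∩ R_{D^A} in R_{D^A}. Then right multiplication by Σ_{σ ∈ Y} σ maps the Specht module V^D into V^{D^A}; in particular it defines a homomorphism of left ℂ[Σ_D]-modules T : V^D → V^{D^A}. -/

import Mathlib

set_option linter.unusedSectionVars false

/-- A diagram: a finite set of boxes `(i, j)`. -/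
abbrev Dg := Finset (ℕ × ℕ)

/-- The sum `Σ σ` over all permutations preserving the value of `g` (e.g. the row or the
column of every box), in the group algebra `ℂ[Perm α]`. -/
noncomputable def Rsum {α : Type} [Fintype α] [DecidableEq α] (g : α → ℕ) :
    MonoidAlgebra ℂ (Equiv.Perm α) :=
  ∑ σ ∈ Finset.univ.filter (fun σ : Equiv.Perm α => ∀ b, g (σ b) = g b),
    MonoidAlgebra.single σ 1

/-- The signed sum `Σ sgn(σ)·σ` over all permutations preserving the value of `g`, in the
group algebra `ℂ[Perm α]`. -/
noncomputable def Csum {α : Type} [Fintype α] [DecidableEq α] (g : α → ℕ) :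
    MonoidAlgebra ℂ (Equiv.Perm α) :=
  ∑ σ ∈ Finset.univ.filter (fun σ : Equiv.Perm α => ∀ b, g (σ b) = g b),
    MonoidAlgebra.single σ ((Equiv.Perm.sign σ : ℤ) : ℂ)

section Core

variable {α : Type} [Fintype α] [DecidableEq α]

lemma permApplyInvSelf (σ : Equiv.Perm α) (b : α) : σ (σ⁻¹ b) = b :=
  Equiv.apply_symm_apply σ b

lemma permInvApplySelf (σ : Equiv.Perm α) (b : α) : σ⁻¹ (σ b) = b :=
  Equiv.symm_apply_apply σ b

lemma presInv (f : α → ℕ) (σ : Equiv.Perm α) (h : ∀ b, f (σ b) = f b) :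
    ∀ b, f (σ⁻¹ b) = f b := by
  intro b
  have := (h (σ⁻¹ b)).symm
  rwa [permApplyInvSelf] at this

lemma swapPres (f : α → ℕ) (x y : α) (h : f x = f y) :
    ∀ b, f (Equiv.swap x y b) = f b := by
  intro b
  by_cases hbx : b = x
  · subst hbx; rw [Equiv.swap_apply_left]; exact h.symm
  by_cases hby : b = y
  · subst hby; rw [Equiv.swap_apply_right]; exact h
  · rw [Equiv.swap_apply_of_ne_of_ne hbx hby]

lemma csum_mul_single (cf : α → ℕ) (t : Equiv.Perm α) (hc : ∀ b, cf (t b) = cf b)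
    (ht : t * t = 1) (hs : Equiv.Perm.sign t = -1) :
    Csum cf * MonoidAlgebra.single t (1 : ℂ) = - Csum cf := by
  unfold Csum
  rw [Finset.sum_mul, ← Finset.sum_neg_distrib]
  refine Finset.sum_nbij' (fun σ => σ * t) (fun σ => σ * t) ?_ ?_ ?_ ?_ ?_
  · intro σ hσ
    simp only [Finset.mem_filter, Finset.mem_univ, true_and] at hσ ⊢
    intro b
    rw [Equiv.Perm.mul_apply, hσ, hc]
  · intro σ hσ
    simp only [Finset.mem_filter, Finset.mem_univ, true_and] at hσ ⊢
    intro b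
    rw [Equiv.Perm.mul_apply, hσ, hc]
  · intro σ _; rw [mul_assoc, ht, mul_one]
  · intro σ _; rw [mul_assoc, ht, mul_one]
  · intro σ _
    rw [MonoidAlgebra.single_mul_single, mul_one]
    rw [← MonoidAlgebra.single_neg]
    congr 1
    rw [Equiv.Perm.sign_mul, hs]
    push_cast
    ring

/-- the set of "bad targets" of `g` -/
def Jset (r' : α → ℕ) (i1 i2 : ℕ) (g : Equiv.Perm α) : Finset α :=
  Finset.univ.filter fun a => r' a = i1 ∧ r' (g⁻¹ a) = i2

/-- a canonical box in row `i2` with the same column as `a` -/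
noncomputable def yFrom [LinearOrder α] (r cf : α → ℕ) (i2 : ℕ) (a : α) : α :=
  if h : (Finset.univ.filter fun y => r y = i2 ∧ cf y = cf a).Nonempty
  then (Finset.univ.filter fun y => r y = i2 ∧ cf y = cf a).min' h else a

lemma yFrom_spec [LinearOrder α] (r cf : α → ℕ) (i2 : ℕ) (a : α)
    (h : ∃ y, r y = i2 ∧ cf y = cf a) :
    r (yFrom r cf i2 a) = i2 ∧ cf (yFrom r cf i2 a) = cf a := by
  have hne : (Finset.univ.filter fun y => r y = i2 ∧ cf y = cf a).Nonempty := by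
    obtain ⟨y, hy1, hy2⟩ := h
    exact ⟨y, by simp [hy1, hy2]⟩
  rw [yFrom, dif_pos hne]
  have := Finset.min'_mem _ hne
  simpa using this

/-- the canonical pairing involution -/
noncomputable def tOf [LinearOrder α] (r r' cf : α → ℕ) (i1 i2 : ℕ) (g : Equiv.Perm α) :
    Equiv.Perm α :=
  if h : (Jset r' i1 i2 g).Nonempty
  then Equiv.swap ((Jset r' i1 i2 g).min' h)
    (yFrom r cf i2 ((Jset r' i1 i2 g).min' h))
  else 1

lemma core [LinearOrder α]
    (r r' cf : α → ℕ) (i1 i2 : ℕ) (h12 : i1 ≠ i2)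
    (L1 : ∀ b, r' b = i2 ∨ r' b = r b)
    (L3 : ∀ b, r b = i2 → r' b = i2)
    (L4 : ∀ b, r' b = i2 → r b = i1 ∨ r b = i2)
    (Hy : ∀ a, r' a = i1 → ∃ y, r y = i2 ∧ cf y = cf a)
    (Y : Finset (Equiv.Perm α))
    (hY1 : ∀ σ ∈ Y, ∀ b, r' (σ b) = r' b)
    (hY2 : ∀ τ : Equiv.Perm α, (∀ b, r' (τ b) = r' b) →
      ∃! σ, σ ∈ Y ∧ (∀ b, r ((τ * σ⁻¹) b) = r b) ∧ (∀ b, r' ((τ * σ⁻¹) b) = r' b)) :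
    Csum cf * Rsum r * (∑ σ ∈ Y, MonoidAlgebra.single σ (1 : ℂ)) = Csum cf * Rsum r' := by
  have hne12 : i2 ≠ i1 := fun h => h12 h.symm
  set Rf : Finset (Equiv.Perm α) :=
    Finset.univ.filter (fun σ : Equiv.Perm α => ∀ b, r (σ b) = r b) with hRf
  set R'f : Finset (Equiv.Perm α) :=
    Finset.univ.filter (fun σ : Equiv.Perm α => ∀ b, r' (σ b) = r' b) with hR'f
  set S : Finset (Equiv.Perm α) :=
    Finset.univ.filter (fun g : Equiv.Perm α =>
      ∃ τ : Equiv.Perm α, (∀ b, r' (τ b) = r' b) ∧ ∀ b, r (g b) = r (τ b)) with hS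
  -- Step 1 : R(D) ⋅ ΣY = ∑_{g ∈ S} g
  have himg : (Rf ×ˢ Y).image (fun p => p.1 * p.2) = S := by
    ext g
    simp only [Finset.mem_image, Finset.mem_product, hS, Finset.mem_filter, Finset.mem_univ,
      true_and, hRf]
    constructor
    · rintro ⟨⟨ρ, σ⟩, ⟨hρ, hσ⟩, rfl⟩
      simp only [Finset.mem_filter, Finset.mem_univ, true_and] at hρ
      exact ⟨σ, hY1 σ hσ, fun b => by rw [Equiv.Perm.mul_apply, hρ]⟩
    · rintro ⟨τ, hτ, hgτ⟩
      obtain ⟨σ, ⟨hσY, hcond, -⟩, -⟩ := hY2 τ hτ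
      refine ⟨(g * σ⁻¹, σ), ⟨?_, hσY⟩, by simp [inv_mul_cancel_right]⟩
      simp only [Finset.mem_filter, Finset.mem_univ, true_and]
      intro b
      rw [Equiv.Perm.mul_apply, hgτ, ← Equiv.Perm.mul_apply τ, hcond]
  have hinj : ∀ p ∈ Rf ×ˢ Y, ∀ q ∈ Rf ×ˢ Y,
      (fun p : Equiv.Perm α × Equiv.Perm α => p.1 * p.2) p
        = (fun p : Equiv.Perm α × Equiv.Perm α => p.1 * p.2) q → p = q := by
    rintro ⟨ρ, σ⟩ hp ⟨ρ', σ'⟩ hq h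
    simp only [Finset.mem_product, hRf, Finset.mem_filter, Finset.mem_univ, true_and] at hp hq
    obtain ⟨hρ, hσ⟩ := hp
    obtain ⟨hρ', hσ'⟩ := hq
    simp only at h
    have key : σ' * σ⁻¹ = ρ'⁻¹ * ρ := by
      have h1 : ρ' * (σ' * σ⁻¹) = ρ := by rw [← mul_assoc, ← h, mul_inv_cancel_right]
      have h2 : ρ' * (ρ'⁻¹ * ρ) = ρ := mul_inv_cancel_left ρ' ρ
      exact mul_left_cancel (h1.trans h2.symm)
    obtain ⟨σ₀, -, huniq⟩ := hY2 σ' (hY1 σ' hσ')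
    have e1 : σ' = σ₀ := by
      refine huniq σ' ⟨hσ', ?_, ?_⟩ <;> rw [mul_inv_cancel] <;> intro b <;> rfl
    have e2 : σ = σ₀ := by
      refine huniq σ ⟨hσ, ?_, ?_⟩
      · intro b
        rw [key, Equiv.Perm.mul_apply]
        rw [presInv r ρ' hρ', hρ]
      · intro b
        rw [Equiv.Perm.mul_apply, hY1 σ' hσ', presInv r' σ (hY1 σ hσ)]
    have eσ : σ = σ' := e2.trans e1.symm
    subst eσ
    have : ρ = ρ' := mul_right_cancel h
    rw [this]
  have step1 : Rsum r * (∑ σ ∈ Y, MonoidAlgebra.single σ (1 : ℂ))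
      = ∑ g ∈ S, MonoidAlgebra.single g (1 : ℂ) := by
    rw [Rsum, Finset.sum_mul_sum, ← hRf]
    rw [← himg, Finset.sum_image hinj, Finset.sum_product]
    refine Finset.sum_congr rfl fun ρ _ => Finset.sum_congr rfl fun σ _ => ?_
    rw [MonoidAlgebra.single_mul_single, one_mul]
  -- Step 2 : expand
  have step2 : Csum cf * Rsum r * (∑ σ ∈ Y, MonoidAlgebra.single σ (1 : ℂ))
      = ∑ g ∈ S, Csum cf * MonoidAlgebra.single g (1 : ℂ) := by
    rw [mul_assoc, step1, Finset.mul_sum]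
  -- Step 3 : R'f ⊆ S
  have hsub : R'f ⊆ S := by
    intro g hg
    simp only [hR'f, Finset.mem_filter, Finset.mem_univ, true_and] at hg
    simp only [hS, Finset.mem_filter, Finset.mem_univ, true_and]
    exact ⟨g, hg, fun b => rfl⟩
  -- the involution and its properties
  have key : ∀ g ∈ S \ R'f,
      (Csum cf * MonoidAlgebra.single (tOf r r' cf i1 i2 g * g) (1 : ℂ)
        = - (Csum cf * MonoidAlgebra.single g (1 : ℂ))) ∧
      (tOf r r' cf i1 i2 g * g ∈ S \ R'f) ∧
      (tOf r r' cf i1 i2 (tOf r r' cf i1 i2 g * g) = tOf r r' cf i1 i2 g) ∧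
      (tOf r r' cf i1 i2 g * (tOf r r' cf i1 i2 g * g) = g) ∧
      (tOf r r' cf i1 i2 g * g ≠ g) := by
    intro g hg
    rw [Finset.mem_sdiff] at hg
    obtain ⟨hgS, hgR'⟩ := hg
    rw [hS, Finset.mem_filter] at hgS
    obtain ⟨-, τ, hτ, hgτ⟩ := hgS
    rw [hR'f, Finset.mem_filter] at hgR'
    have hgR' : ¬ ∀ b, r' (g b) = r' b := fun h => hgR' ⟨Finset.mem_univ g, h⟩
    -- J(g) is nonempty
    have hJne : (Jset r' i1 i2 g).Nonempty := by
      by_contra hJ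
      rw [Finset.not_nonempty_iff_eq_empty] at hJ
      have hJ' : ∀ a, ¬ (r' a = i1 ∧ r' (g⁻¹ a) = i2) := by
        intro a ha
        have : a ∈ Jset r' i1 i2 g := by
          rw [Jset, Finset.mem_filter]; exact ⟨Finset.mem_univ a, ha⟩
        rw [hJ] at this
        exact absurd this (Finset.notMem_empty a)
      -- g preserves Q = {z | r' z = i2}
      set Q : Finset α := Finset.univ.filter (fun z => r' z = i2) with hQdef
      have hQ : ∀ z ∈ Q, g z ∈ Q := by
        intro z hz
        rw [hQdef, Finset.mem_filter] at hz ⊢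
        refine ⟨Finset.mem_univ _, ?_⟩
        obtain ⟨-, hz⟩ := hz
        have h1 : r (g z) = r (τ z) := hgτ z
        have h2 : r' (τ z) = i2 := by rw [hτ z, hz]
        rcases L4 (τ z) h2 with h3 | h3
        · rcases L1 (g z) with h4 | h4
          · exact h4
          · exfalso
            refine hJ' (g z) ⟨?_, ?_⟩
            · rw [h4, h1, h3]
            · rw [permInvApplySelf, hz]
        · exact L3 (g z) (h1.trans h3)
      have himgQ : Q.image g = Q := by
        refine Finset.eq_of_subset_of_card_le ?_ ?_
        · intro x hx
          rw [Finset.mem_image] at hx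
          obtain ⟨z, hz, rfl⟩ := hx
          exact hQ z hz
        · rw [Finset.card_image_of_injective Q (Equiv.injective g)]
      have hQiff : ∀ z, g z ∈ Q → z ∈ Q := by
        intro z hz
        rw [← himgQ, Finset.mem_image] at hz
        obtain ⟨z₀, hz₀, he⟩ := hz
        rwa [← Equiv.injective g he]
      have memQ : ∀ z, z ∈ Q ↔ r' z = i2 := by
        intro z; rw [hQdef, Finset.mem_filter]; simp
      -- now g preserves r', contradiction
      refine hgR' fun b => ?_
      by_cases hb2 : r' b = i2
      · have : g b ∈ Q := hQ b ((memQ b).mpr hb2)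
        rw [(memQ (g b)).mp this, hb2]
      by_cases hb1 : r' b = i1
      · -- b is in row i1 of both
        have hrb : r b = i1 := by
          rcases L1 b with h | h
          · exact absurd h hb2
          · rw [← h, hb1]
        have h2 : r' (τ b) = i1 := by rw [hτ b, hb1]
        have hrτ : r (τ b) = i1 := by
          rcases L1 (τ b) with h | h
          · exact absurd (h2.symm.trans h) h12
          · rw [← h, h2]
        have hrg : r (g b) = i1 := (hgτ b).trans hrτ
        have hgbQ : g b ∉ Q := fun h => hb2 ((memQ b).mp (hQiff b h))
        have hgb2 : r' (g b) ≠ i2 := fun h => hgbQ ((memQ (g b)).mpr h)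
        rcases L1 (g b) with h | h
        · exact absurd h hgb2
        · rw [h, hrg, hb1]
      · -- other rows
        have hrb : r b = r' b := by
          rcases L1 b with h | h
          · exact absurd h hb2
          · exact h.symm
        have hτ2 : r' (τ b) ≠ i2 := by rw [hτ b]; exact hb2
        have hrτ : r (τ b) = r' b := by
          rcases L1 (τ b) with h | h
          · exact absurd h hτ2
          · rw [← h, hτ b]
        have hrg : r (g b) = r' b := (hgτ b).trans hrτ
        rcases L1 (g b) with h | h
        · exfalso
          rcases L4 (g b) h with h' | h'
          · exact hb1 (hrg.symm.trans h')
          · exact hb2 (hrg.symm.trans h')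
        · rw [h, hrg]
    -- the canonical box a and its partner y
    set a : α := (Jset r' i1 i2 g).min' hJne with hadef
    have haJ : a ∈ Jset r' i1 i2 g := Finset.min'_mem _ hJne
    rw [Jset, Finset.mem_filter] at haJ
    obtain ⟨-, ha1, ha2⟩ := haJ
    set y : α := yFrom r cf i2 a with hydef
    obtain ⟨hy1, hy2⟩ := yFrom_spec r cf i2 a (Hy a ha1)
    have hra : r a = i1 := by
      rcases L1 a with h | h
      · exact absurd (ha1.symm.trans h) h12
      · rw [← h, ha1]
    have hay : a ≠ y := fun h => h12 (by rw [← hra, h, hy1])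
    have hry' : r' y = i2 := L3 y hy1
    set t : Equiv.Perm α := Equiv.swap a y with htdef
    have htOf : tOf r r' cf i1 i2 g = t := by
      rw [tOf, dif_pos hJne]
    have htc : ∀ b, cf (t b) = cf b := swapPres cf a y hy2.symm
    have ht2 : t * t = 1 := Equiv.swap_mul_self a y
    have hsgn : Equiv.Perm.sign t = -1 := Equiv.Perm.sign_swap hay
    -- decomposition g = ρ τ
    set ρ : Equiv.Perm α := g * τ⁻¹ with hρdef
    have hρ : ∀ b, r (ρ b) = r b := by
      intro b
      rw [hρdef, Equiv.Perm.mul_apply, hgτ, permApplyInvSelf]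
    have hgdec : g = ρ * τ := by rw [hρdef, inv_mul_cancel_right]
    have hρia : r' (ρ⁻¹ a) = i2 := by
      have : ρ⁻¹ a = τ (g⁻¹ a) := by
        rw [hρdef, mul_inv_rev, inv_inv, Equiv.Perm.mul_apply]
      rw [this, hτ, ha2]
    have hρiy : r' (ρ⁻¹ y) = i2 := by
      refine L3 _ ?_
      rw [presInv r ρ hρ, hy1]
    set u : Equiv.Perm α := Equiv.swap (ρ⁻¹ a) (ρ⁻¹ y) with hudef
    have hu : ∀ b, r' (u b) = r' b := swapPres r' _ _ (hρia.trans hρiy.symm)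
    have htρ : t * ρ = ρ * u := by
      rw [htdef, hudef]
      exact Equiv.swap_mul_eq_mul_swap ρ a y
    have htg : t * g = ρ * (u * τ) := by
      calc t * g = t * (ρ * τ) := by rw [← hgdec]
        _ = (t * ρ) * τ := (mul_assoc t ρ τ).symm
        _ = (ρ * u) * τ := by rw [htρ]
        _ = ρ * (u * τ) := mul_assoc ρ u τ
    have huτ : ∀ b, r' ((u * τ) b) = r' b := by
      intro b; rw [Equiv.Perm.mul_apply, hu, hτ]
    -- t*g ∈ S
    have htgS : t * g ∈ S := by
      rw [hS, Finset.mem_filter]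
      refine ⟨Finset.mem_univ _, u * τ, huτ, ?_⟩
      intro b
      rw [htg, Equiv.Perm.mul_apply, hρ]
    -- t*g ∉ R'f
    have htgR' : t * g ∉ R'f := by
      intro h
      rw [hR'f, Finset.mem_filter] at h
      obtain ⟨-, h⟩ := h
      refine hgR' fun b => ?_
      have hρ' : ∀ b, r' (ρ b) = r' b := by
        intro b
        have : ρ b = (t * g) ((u * τ)⁻¹ b) := by
          rw [← Equiv.Perm.mul_apply, htg, mul_inv_cancel_right]
        rw [this, h, presInv r' (u * τ) huτ]
      rw [hgdec, Equiv.Perm.mul_apply, hρ', hτ]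
    -- J(t*g) = J(g)
    have hgy : r' (g⁻¹ y) = i2 := by
      have e : g⁻¹ y = τ⁻¹ (ρ⁻¹ y) := by
        rw [hgdec, mul_inv_rev, Equiv.Perm.mul_apply]
      rw [e, presInv r' τ hτ, hρiy]
    have htA : t a = y := by rw [htdef]; exact Equiv.swap_apply_left a y
    have hinv : ∀ w, (t * g)⁻¹ w = g⁻¹ (t w) := by
      intro w
      have e : t⁻¹ = t := by rw [htdef]; exact Equiv.swap_inv a y
      rw [mul_inv_rev, Equiv.Perm.mul_apply, e]
    have hJeq : Jset r' i1 i2 (t * g) = Jset r' i1 i2 g := by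
      ext z
      simp only [Jset, Finset.mem_filter, Finset.mem_univ, true_and]
      by_cases hz : z = a
      · constructor
        · rintro ⟨h1, -⟩
          exact ⟨h1, by rw [hz]; exact ha2⟩
        · rintro ⟨h1, -⟩
          refine ⟨h1, ?_⟩
          rw [hinv, hz, htA, hgy]
      · by_cases hz2 : z = y
        · have hf : ¬ r' z = i1 := by rw [hz2, hry']; exact hne12
          constructor <;> (rintro ⟨h1, -⟩; exact absurd h1 hf)
        · have htz : t z = z := by
            rw [htdef]; exact Equiv.swap_apply_of_ne_of_ne hz hz2
          rw [hinv, htz]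
    refine ⟨?_, ?_, ?_, ?_, ?_⟩
    · -- sign flip
      rw [htOf]
      have e : MonoidAlgebra.single (t * g) (1 : ℂ)
          = MonoidAlgebra.single t (1 : ℂ) * MonoidAlgebra.single g (1 : ℂ) := by
        rw [MonoidAlgebra.single_mul_single, one_mul]
      rw [e, ← mul_assoc, csum_mul_single cf t htc ht2 hsgn, neg_mul]
    · rw [htOf, Finset.mem_sdiff]; exact ⟨htgS, htgR'⟩
    · conv_lhs => rw [htOf]
      simp only [tOf, hJeq]
    · rw [htOf, ← mul_assoc, ht2, one_mul]
    · rw [htOf]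
      intro h
      have h' : t * g = 1 * g := by rw [one_mul]; exact h
      have ht1 : t = 1 := mul_right_cancel h'
      have h2 : t a = a := by rw [ht1]; rfl
      rw [htdef, Equiv.swap_apply_left] at h2
      exact hay h2.symm
  -- Step 4 : the sum over S \ R'f vanishes
  have step4 : ∑ g ∈ S \ R'f, Csum cf * MonoidAlgebra.single g (1 : ℂ) = 0 := by
    refine Finset.sum_involution (fun g _ => tOf r r' cf i1 i2 g * g) ?_ ?_ ?_ ?_
    · intro g hg
      rw [(key g hg).1]
      simp
    · intro g hg _
      exact (key g hg).2.2.2.2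
    · intro g hg
      exact (key g hg).2.1
    · intro g hg
      rw [(key g hg).2.2.1]
      exact (key g hg).2.2.2.1
  -- assemble
  rw [step2, ← Finset.sum_sdiff hsub, step4, zero_add, ← Finset.mul_sum]
  congr 1

end Core

/-- With `D^A`, `φ`, and `Y` as above, right multiplication by
`Σ_{σ ∈ Y} σ` maps the Specht module `V^D = ℂ[Σ_D]·C(D)·R(D)` into
`V^{D^A} = ℂ[Σ_D]·C(D^A)·R(D^A)`, and defines a homomorphism of left
`ℂ[Σ_D]`-modules `T : V^D → V^{D^A}`. -/
theorem statement13 (D DA : Dg) (i1 i2 : ℕ) (h12 : i1 ≠ i2)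
    (hDA1 : ∀ p q : ℕ, p ≠ i1 → p ≠ i2 → ((p, q) ∈ DA ↔ (p, q) ∈ D))
    (hDA2 : ∀ q : ℕ, (i1, q) ∈ DA ↔ ((i1, q) ∈ D ∧ (i2, q) ∈ D))
    (hDA3 : ∀ q : ℕ, (i2, q) ∈ DA ↔ ((i1, q) ∈ D ∨ (i2, q) ∈ D))
    (φ : {x : ℕ × ℕ // x ∈ D} ≃ {x : ℕ × ℕ // x ∈ DA})
    (hφ : ∀ b : {x : ℕ × ℕ // x ∈ D},
      (φ b).val = if b.val.1 = i1 ∧ (i2, b.val.2) ∉ D then (i2, b.val.2) else b.val)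
    (Y : Finset (Equiv.Perm {x : ℕ × ℕ // x ∈ D}))
    (hY1 : ∀ σ ∈ Y, ∀ b, (φ (σ b)).val.1 = (φ b).val.1)
    (hY2 : ∀ τ : Equiv.Perm {x : ℕ × ℕ // x ∈ D}, (∀ b, (φ (τ b)).val.1 = (φ b).val.1) →
      ∃! σ, σ ∈ Y ∧ (∀ b, ((τ * σ⁻¹) b).val.1 = b.val.1) ∧
        (∀ b, (φ ((τ * σ⁻¹) b)).val.1 = (φ b).val.1))
    :
    (∀ v ∈ Submodule.span (MonoidAlgebra ℂ (Equiv.Perm {x : ℕ × ℕ // x ∈ D}))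
        {Csum (fun b : {x : ℕ × ℕ // x ∈ D} => b.val.2) *
          Rsum (fun b : {x : ℕ × ℕ // x ∈ D} => b.val.1)},
      v * (∑ σ ∈ Y, MonoidAlgebra.single σ (1 : ℂ)) ∈
        Submodule.span (MonoidAlgebra ℂ (Equiv.Perm {x : ℕ × ℕ // x ∈ D}))
          {Csum (fun b : {x : ℕ × ℕ // x ∈ D} => (φ b).val.2) *
            Rsum (fun b : {x : ℕ × ℕ // x ∈ D} => (φ b).val.1)}) ∧
    (∀ (c v : MonoidAlgebra ℂ (Equiv.Perm {x : ℕ × ℕ // x ∈ D})),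
      (c * v) * (∑ σ ∈ Y, MonoidAlgebra.single σ (1 : ℂ)) =
        c * (v * (∑ σ ∈ Y, MonoidAlgebra.single σ (1 : ℂ)))) := by
  letI : LinearOrder {x : ℕ × ℕ // x ∈ D} :=
    LinearOrder.lift' (fun a => Nat.pair a.val.1 a.val.2) (by
      intro a b h
      rw [Nat.pair_eq_pair] at h
      exact Subtype.ext (Prod.ext h.1 h.2))
  have hcol : ∀ b : {x : ℕ × ℕ // x ∈ D}, (φ b).val.2 = b.val.2 := by
    intro b
    rw [hφ]
    split <;> rfl
  have hCeq : (fun b : {x : ℕ × ℕ // x ∈ D} => (φ b).val.2)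
      = (fun b : {x : ℕ × ℕ // x ∈ D} => b.val.2) := funext hcol
  have L1 : ∀ b : {x : ℕ × ℕ // x ∈ D}, (φ b).val.1 = i2 ∨ (φ b).val.1 = b.val.1 := by
    intro b
    rw [hφ]
    split
    · left; rfl
    · right; rfl
  have L3 : ∀ b : {x : ℕ × ℕ // x ∈ D}, b.val.1 = i2 → (φ b).val.1 = i2 := by
    intro b hb
    rw [hφ]
    split
    · rfl
    · exact hb
  have L4 : ∀ b : {x : ℕ × ℕ // x ∈ D}, (φ b).val.1 = i2 → b.val.1 = i1 ∨ b.val.1 = i2 := by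
    intro b hb
    rw [hφ] at hb
    by_cases hc : b.val.1 = i1 ∧ (i2, b.val.2) ∉ D
    · exact Or.inl hc.1
    · rw [if_neg hc] at hb
      exact Or.inr hb
  have Hy : ∀ a : {x : ℕ × ℕ // x ∈ D}, (φ a).val.1 = i1 →
      ∃ y : {x : ℕ × ℕ // x ∈ D}, y.val.1 = i2 ∧ y.val.2 = a.val.2 := by
    intro a ha
    rw [hφ] at ha
    by_cases hc : a.val.1 = i1 ∧ (i2, a.val.2) ∉ D
    · rw [if_pos hc] at ha
      exact absurd ha.symm h12
    · rw [if_neg hc] at ha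
      push_neg at hc
      exact ⟨⟨(i2, a.val.2), hc ha⟩, rfl, rfl⟩
  have main := core (fun b : {x : ℕ × ℕ // x ∈ D} => b.val.1)
    (fun b : {x : ℕ × ℕ // x ∈ D} => (φ b).val.1)
    (fun b : {x : ℕ × ℕ // x ∈ D} => b.val.2) i1 i2 h12 L1 L3 L4 Hy Y hY1 hY2
  constructor
  · intro v hv
    rw [hCeq]
    obtain ⟨x, rfl⟩ := Submodule.mem_span_singleton.mp hv
    refine Submodule.mem_span_singleton.mpr ⟨x, ?_⟩
    rw [smul_eq_mul, smul_eq_mul, mul_assoc, mul_assoc]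
    rw [← mul_assoc (Csum _), main]
  · intro c v
    rw [mul_assoc]
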